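/- Let k ∈ ℂ with Im k > 0, and let b ≥ 0, c ∈ ℝ with 1 + bc ≥ 0, θ, φ ∈ ℝ. Define ψ(x) = e^{iθ}(√(1+bc)·e^{iφ} − ikb)·e^{ikx} for x > 0 and ψ(x) = e^{-ikx} for x < 0. Then ψ ∈ L²(ℝ), ψ satisfies -ψ'' = k²ψ on ℝ \ {0}, and ψ satisfies the boundary conditions (ψ(+0), ψ'(+0))ᵀ = e^{iθ}·((√(1+bc)e^{iφ}, b), (c, √(1+bc)e^{-iφ}))·(ψ(-0), ψ'(-0))ᵀ if and only if k satisfies b·k² + 2i·cos φ·√(1+bc)·k − c = 0. -/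

import Mathlib

open Complex MeasureTheory Set


lemma expDeriv (A c : ℂ) (x : ℝ) :
    HasDerivAt (fun y : ℝ => A * Complex.exp (c * y)) (c * (A * Complex.exp (c * x))) x := by
  have h1 : HasDerivAt (fun y : ℝ => c * (y : ℂ)) c x := by
    simpa using (((hasDerivAt_id (x : ℂ)).const_mul c).comp_ofReal)
  have := (h1.cexp).const_mul A
  simpa [mul_comm, mul_left_comm] using this

lemma secondDeriv (A c : ℂ) (x : ℝ) :
    deriv (deriv (fun y : ℝ => A * Complex.exp (c * y))) x
      = c * c * (A * Complex.exp (c * x)) := by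
  have hd : deriv (fun y : ℝ => A * Complex.exp (c * y))
      = fun y : ℝ => (c * A) * Complex.exp (c * y) := by
    funext y
    rw [(expDeriv A c y).deriv]; ring
  rw [hd, (expDeriv (c * A) c x).deriv]; ring

/-- The Ansatz ψ(x) = e^{iθ}(√(1+bc)e^{iφ} - ikb)e^{ikx} for x > 0, ψ(x) = e^{-ikx} for
x < 0 (Im k > 0) is square integrable, satisfies -ψ'' = k²ψ away from the origin, and
satisfies the connected PT boundary conditions iff b k² + 2i cos φ √(1+bc) k - c = 0. -/
theorem stmt12 (k : ℂ) (hk : 0 < k.im) (b c θ φ : ℝ) (hb : 0 ≤ b) (hbc : 0 ≤ 1 + b * c)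
    (ψ : ℝ → ℂ)
    (hψ : ψ = fun x : ℝ => if x < 0 then Complex.exp (-I * k * x)
      else Complex.exp ((θ : ℂ) * I)
        * ((Real.sqrt (1 + b * c) : ℂ) * Complex.exp ((φ : ℂ) * I) - I * k * b)
        * Complex.exp (I * k * x)) :
    MemLp ψ 2 volume ∧
    (∀ x : ℝ, x ≠ 0 → deriv (deriv ψ) x = -(k ^ 2) * ψ x) ∧
    ((Complex.exp ((θ : ℂ) * I)
          * ((Real.sqrt (1 + b * c) : ℂ) * Complex.exp ((φ : ℂ) * I) - I * k * b)
        = Complex.exp ((θ : ℂ) * I)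
          * ((Real.sqrt (1 + b * c) : ℂ) * Complex.exp ((φ : ℂ) * I) * 1
              + (b : ℂ) * (-(I * k))) ∧
      I * k * (Complex.exp ((θ : ℂ) * I)
          * ((Real.sqrt (1 + b * c) : ℂ) * Complex.exp ((φ : ℂ) * I) - I * k * b))
        = Complex.exp ((θ : ℂ) * I)
          * ((c : ℂ) * 1
              + (Real.sqrt (1 + b * c) : ℂ) * Complex.exp (-(φ : ℂ) * I) * (-(I * k)))) ↔
      (b : ℂ) * k ^ 2 + 2 * I * (Real.cos φ : ℂ) * (Real.sqrt (1 + b * c) : ℂ) * k - (c : ℂ)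
        = 0) := by
  set C : ℂ := Complex.exp ((θ : ℂ) * I)
    * ((Real.sqrt (1 + b * c) : ℂ) * Complex.exp ((φ : ℂ) * I) - I * k * b) with hC
  have ha : (0 : ℝ) < 2 * k.im := by linarith
  refine ⟨?_, ?_, ?_⟩
  · -- Memℒp
    have hmeas : AEStronglyMeasurable ψ volume := by
      rw [hψ]
      refine (Measurable.ite measurableSet_Iio ?_ ?_).aestronglyMeasurable <;> fun_prop
    refine (memLp_two_iff_integrable_sq_norm hmeas).2 ?_
    rw [← integrableOn_univ, ← Iio_union_Ici (a := (0 : ℝ)), integrableOn_union]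
    constructor
    · rw [← (Measure.measurePreserving_neg (volume : Measure ℝ)).integrableOn_comp_preimage
        (Homeomorph.neg ℝ).measurableEmbedding]
      simp only [Function.comp_def, neg_preimage, neg_Iio, neg_zero]
      refine (exp_neg_integrableOn_Ioi 0 ha).congr_fun ?_ measurableSet_Ioi
      intro y hy
      have h1 : -y < 0 := neg_lt_zero.2 (mem_Ioi.mp hy)
      rw [hψ]
      simp only [if_pos h1]
      rw [Complex.norm_exp]
      have h2 : ((-I) * k * ((-y : ℝ) : ℂ)).re = k.im * (-y) := by
        simp [Complex.mul_re]
      rw [h2, sq, ← Real.exp_add]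
      congr 1; ring
    · have base : IntegrableOn (fun x : ℝ => ‖C‖ ^ 2 * Real.exp (-(2 * k.im) * x))
          (Ici (0 : ℝ)) := by
        refine Integrable.const_mul ?_ _
        exact (exp_neg_integrableOn_Ioi (-1) ha).mono_set
          (fun x hx => lt_of_lt_of_le (by norm_num : (-1 : ℝ) < 0) hx)
      refine base.congr_fun ?_ measurableSet_Ici
      intro y hy
      have h1 : ¬ y < 0 := not_lt.2 hy
      rw [hψ]
      simp only [if_neg h1]
      have h2 : (I * k * ((y : ℝ) : ℂ)).re = -k.im * y := by
        simp [Complex.mul_re]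
      have h3 : ‖C * Complex.exp (I * k * ((y : ℝ) : ℂ))‖ ^ 2
          = ‖C‖ ^ 2 * Real.exp (-(2 * k.im) * y) := by
        rw [norm_mul, mul_pow, Complex.norm_exp, h2,
          sq (Real.exp _), ← Real.exp_add]
        congr 2; ring
      rw [h3]
  · -- ODE
    intro x hx
    rcases lt_or_gt_of_ne hx with hlt | hgt
    · have hev : ψ =ᶠ[nhds x] (fun y : ℝ => (1 : ℂ) * Complex.exp ((-I * k) * y)) := by
        filter_upwards [Iio_mem_nhds hlt] with y hy
        rw [hψ]; simp only [if_pos (mem_Iio.mp hy), one_mul]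
      rw [hev.deriv.deriv_eq, secondDeriv 1 (-I * k) x]
      have hψx : ψ x = Complex.exp ((-I * k) * x) := by
        rw [hψ]; simp only [if_pos hlt]
      rw [hψx]
      linear_combination (k ^ 2 * Complex.exp ((-I * k) * x)) * Complex.I_sq
    · have hev : ψ =ᶠ[nhds x] (fun y : ℝ => C * Complex.exp ((I * k) * y)) := by
        filter_upwards [Ioi_mem_nhds hgt] with y hy
        rw [hψ]; simp only [if_neg (not_lt.2 (mem_Ioi.mp hy).le), hC]
      rw [hev.deriv.deriv_eq, secondDeriv C (I * k) x]
      have hψx : ψ x = C * Complex.exp ((I * k) * x) := by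
        rw [hψ]; simp only [if_neg (not_lt.2 hgt.le), hC]
      rw [hψx]
      linear_combination (k ^ 2 * (C * Complex.exp ((I * k) * x))) * Complex.I_sq
  · -- boundary condition iff
    have hE : Complex.exp ((θ : ℂ) * I) ≠ 0 := Complex.exp_ne_zero _
    have hcos : 2 * Complex.cos (φ : ℂ)
        = Complex.exp ((φ : ℂ) * I) + Complex.exp (-(φ : ℂ) * I) := Complex.two_cos φ
    constructor
    · rintro ⟨-, h2⟩
      have h3 : I * k * ((Real.sqrt (1 + b * c) : ℂ) * Complex.exp ((φ : ℂ) * I) - I * k * b)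
          = (c : ℂ) * 1 + (Real.sqrt (1 + b * c) : ℂ) * Complex.exp (-(φ : ℂ) * I)
              * (-(I * k)) := by
        apply mul_left_cancel₀ hE
        linear_combination h2
      rw [Complex.ofReal_cos]
      linear_combination h3 + ((b : ℂ) * k ^ 2) * Complex.I_sq
        + I * (Real.sqrt (1 + b * c) : ℂ) * k * hcos
    · intro h
      rw [Complex.ofReal_cos] at h
      refine ⟨by ring, ?_⟩
      linear_combination Complex.exp ((θ : ℂ) * I) * h
        - Complex.exp ((θ : ℂ) * I) * ((b : ℂ) * k ^ 2) * Complex.I_sq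
        - Complex.exp ((θ : ℂ) * I) * I * (Real.sqrt (1 + b * c) : ℂ) * k * hcos
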